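/- Let p, q, f be pmfs on a finite set α. If H(p‖q) ≥ H(q‖f), then D(p‖f) ≥ 2·(H(p‖q) − H(q‖f))². -/

import Mathlib

/-- `p` is a probability mass function on the finite type `α`. -/
def IsPmf {α : Type*} [Fintype α] (p : α → ℝ) : Prop :=
  (∀ a, 0 ≤ p a) ∧ ∑ a, p a = 1

/-- Squared Hellinger divergence between pmfs on a finite type. -/
noncomputable def hellingerSq {α : Type*} [Fintype α] (p q : α → ℝ) : ℝ :=
  (1 / 2) * ∑ a, (Real.sqrt (p a) - Real.sqrt (q a)) ^ 2

/-- Hellinger distance between pmfs on a finite type. -/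
noncomputable def hellinger {α : Type*} [Fintype α] (p q : α → ℝ) : ℝ :=
  Real.sqrt (hellingerSq p q)

/-- Kullback–Leibler divergence between pmfs on a finite type, valued in `EReal`:
it is `+∞` unless `p` is absolutely continuous with respect to `q`, in which case it is
`∑ a, p a * log (p a / q a)` (with `0 * log (0/x) = 0`). -/
noncomputable def klDiv {α : Type*} [Fintype α] (p q : α → ℝ) : EReal :=
  if ∀ a, q a = 0 → p a = 0 then ((∑ a, p a * Real.log (p a / q a) : ℝ) : EReal) else ⊤

lemma hellingerSq_nonneg {α : Type*} [Fintype α] (p q : α → ℝ) : 0 ≤ hellingerSq p q := by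
  unfold hellingerSq
  positivity

lemma hellingerSq_comm {α : Type*} [Fintype α] (p q : α → ℝ) :
    hellingerSq p q = hellingerSq q p := by
  unfold hellingerSq
  congr 1
  exact Finset.sum_congr rfl fun a _ => by ring

lemma hellinger_eq_dist {α : Type*} [Fintype α] (p q : α → ℝ) :
    hellinger p q = Real.sqrt (1/2) *
      dist (show EuclideanSpace ℝ α from WithLp.toLp 2 fun a => Real.sqrt (p a))
           (show EuclideanSpace ℝ α from WithLp.toLp 2 fun a => Real.sqrt (q a)) := by
  rw [hellinger, hellingerSq, Real.sqrt_mul (by norm_num), EuclideanSpace.dist_eq]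
  simp [Real.dist_eq, sq_abs]

lemma hellinger_triangle {α : Type*} [Fintype α] (p q f : α → ℝ) :
    hellinger p q ≤ hellinger p f + hellinger f q := by
  rw [hellinger_eq_dist p q, hellinger_eq_dist p f, hellinger_eq_dist f q, ← mul_add]
  exact mul_le_mul_of_nonneg_left (dist_triangle _ _ _) (Real.sqrt_nonneg _)

/-- If `H(p‖q) ≥ H(q‖f)`, then `D(p‖f) ≥ 2·(H(p‖q) − H(q‖f))²`. -/
theorem klDiv_ge_of_hellinger_far {α : Type*} [Fintype α]
    (p q f : α → ℝ) (hp : IsPmf p) (hq : IsPmf q) (hf : IsPmf f)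
    (hfar : hellinger q f ≤ hellinger p q) :
    ((2 * (hellinger p q - hellinger q f) ^ 2 : ℝ) : EReal) ≤ klDiv p f := by
  unfold klDiv
  by_cases hAC : ∀ a, f a = 0 → p a = 0
  · rw [if_pos hAC, EReal.coe_le_coe_iff]
    -- pointwise bound via log x ≤ x - 1
    have hpoint : ∀ a, 2 * (p a - Real.sqrt (p a * f a)) ≤ p a * Real.log (p a / f a) := by
      intro a
      rcases eq_or_lt_of_le (hp.1 a) with h0 | hpa
      · simp [← h0]
      · have hfa : 0 < f a := by
          rcases eq_or_lt_of_le (hf.1 a) with h0 | h; · exact absurd (hAC a h0.symm) (by positivity)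
          exact h
        have hlog : Real.log (Real.sqrt (f a) / Real.sqrt (p a)) ≤
            Real.sqrt (f a) / Real.sqrt (p a) - 1 :=
          Real.log_le_sub_one_of_pos (by positivity)
        have hrw : Real.log (p a / f a) = -2 * Real.log (Real.sqrt (f a) / Real.sqrt (p a)) := by
          rw [Real.log_div (by positivity) (by positivity),
              Real.log_div (by positivity) (by positivity),
              Real.log_sqrt (hf.1 a), Real.log_sqrt (hp.1 a)]
          ring
        rw [hrw]
        have h1 : p a * (Real.sqrt (f a) / Real.sqrt (p a)) = Real.sqrt (p a * f a) := by
          rw [Real.sqrt_mul (hp.1 a), mul_div_assoc', div_eq_iff (by positivity)]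
          linear_combination (-Real.sqrt (f a)) * (Real.mul_self_sqrt (hp.1 a))
        nlinarith [mul_le_mul_of_nonneg_left hlog (hp.1 a)]
    have key : ∀ a, (Real.sqrt (p a) - Real.sqrt (f a)) ^ 2
        = p a + f a - 2 * Real.sqrt (p a * f a) := fun a => by
      rw [Real.sqrt_mul (hp.1 a)]
      nlinarith [Real.sq_sqrt (hp.1 a), Real.sq_sqrt (hf.1 a)]
    have e : ∑ a, (Real.sqrt (p a) - Real.sqrt (f a)) ^ 2
        = ∑ a, 2 * (p a - Real.sqrt (p a * f a)) := by
      calc ∑ a, (Real.sqrt (p a) - Real.sqrt (f a)) ^ 2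
          = ∑ a, (p a + f a - 2 * Real.sqrt (p a * f a)) :=
            Finset.sum_congr rfl fun a _ => key a
        _ = (∑ a, p a) + (∑ a, f a) - 2 * ∑ a, Real.sqrt (p a * f a) := by
            rw [Finset.sum_sub_distrib, Finset.sum_add_distrib, Finset.mul_sum]
        _ = 2 * ((∑ a, p a) - ∑ a, Real.sqrt (p a * f a)) := by
            rw [hp.2, hf.2]; ring
        _ = ∑ a, 2 * (p a - Real.sqrt (p a * f a)) := by
            rw [← Finset.sum_sub_distrib, Finset.mul_sum]
    have hsum : ∑ a, (Real.sqrt (p a) - Real.sqrt (f a)) ^ 2 ≤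
        ∑ a, p a * Real.log (p a / f a) := by
      rw [e]; exact Finset.sum_le_sum fun a _ => hpoint a
    have h3 : 2 * (hellinger p f) ^ 2 = ∑ a, (Real.sqrt (p a) - Real.sqrt (f a)) ^ 2 := by
      rw [hellinger, Real.sq_sqrt (hellingerSq_nonneg p f), hellingerSq]; ring
    have htri : hellinger p q - hellinger q f ≤ hellinger p f := by
      have h := hellinger_triangle p q f
      have hsym : hellinger f q = hellinger q f := by
        rw [hellinger, hellinger, hellingerSq_comm]
      linarith
    have h0 : 0 ≤ hellinger p q - hellinger q f := sub_nonneg.2 hfar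
    have h2 : (hellinger p q - hellinger q f) ^ 2 ≤ (hellinger p f) ^ 2 :=
      pow_le_pow_left₀ h0 htri 2
    linarith
  · rw [if_neg hAC]
    exact le_top
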